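/- Let $H$ be a real Hilbert space, $f : H \to \mathbb{R}$ convex, lower semi-continuous, and attaining its infimum. Let $(\lambda_k)_{k \geq 1}$ be positive with $\sum_{k=1}^\infty \lambda_k = +\infty$. Define $x_k := J_{\lambda_k}^f(x_{k-1})$ starting from any $x_0$, where $J_\lambda^f(x)$ is the proximal map. Then $\lim_{k\to\infty} f(x_k) = \inf_{y} f(y)$, and moreover $f(x_k) - f(y) \leq \frac{\|y - x_0\|^2}{2\sum_{i=1}^k \lambda_i}$ for every $y$ and every $k \geq 1$. -/

import Mathlib

open Filter Finset

lemma prox_key {H : Type*} [NormedAddCommGroup H] [InnerProductSpace ℝ H]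
    (f : H → ℝ) (hf : ConvexOn ℝ Set.univ f) (a b : H) (lam : ℝ) (hlam : 0 < lam)
    (hmin : IsMinOn (fun y => f y + ‖a - y‖ ^ 2 / (2 * lam)) Set.univ b) (y : H) :
    2 * lam * (f b - f y) ≤ ‖y - a‖ ^ 2 - ‖y - b‖ ^ 2 := by
  set ι : ℝ := inner ℝ (a - b) (y - b) with hι
  set N : ℝ := ‖y - b‖ ^ 2 with hN
  have hl2 : (0:ℝ) < 2 * lam := by linarith
  have hw : ∀ t : ℝ, 0 < t → t ≤ 1 → 2 * lam * (f b - f y) + 2 * ι ≤ t * N := by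
    intro t ht ht1
    have hconv : f ((1 - t) • b + t • y) ≤ (1 - t) * f b + t * f y :=
      hf.2 (Set.mem_univ b) (Set.mem_univ y) (by linarith) ht.le (by ring)
    have h : f b + ‖a - b‖ ^ 2 / (2 * lam)
        ≤ f ((1 - t) • b + t • y) + ‖a - ((1 - t) • b + t • y)‖ ^ 2 / (2 * lam) :=
      hmin (Set.mem_univ _)
    have hsub : a - ((1 - t) • b + t • y) = (a - b) - t • (y - b) := by
      rw [sub_smul, one_smul, smul_sub]; abel
    have hQ : ‖a - ((1 - t) • b + t • y)‖ ^ 2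
        = ‖a - b‖ ^ 2 - 2 * (t * ι) + t ^ 2 * N := by
      rw [hsub, norm_sub_sq_real, real_inner_smul_right, norm_smul,
        Real.norm_eq_abs, abs_of_pos ht, hι, hN]
      ring
    rw [hQ] at h
    have h2 := mul_le_mul_of_nonneg_right h hl2.le
    rw [add_mul, add_mul, div_mul_cancel₀ _ hl2.ne', div_mul_cancel₀ _ hl2.ne'] at h2
    have h3 := mul_le_mul_of_nonneg_right hconv hl2.le
    nlinarith [h2, h3, ht]
  have hB : 2 * lam * (f b - f y) + 2 * ι ≤ 0 := by
    by_contra hc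
    push_neg at hc
    set B : ℝ := 2 * lam * (f b - f y) + 2 * ι with hBdef
    have hN0 : 0 ≤ N := sq_nonneg _
    rcases eq_or_lt_of_le hN0 with hN0' | hNpos
    · have := hw 1 one_pos le_rfl
      rw [← hN0'] at this; linarith
    · have ht0 : 0 < min 1 (B / (2 * N)) := lt_min one_pos (by positivity)
      have h7 := hw _ ht0 (min_le_left _ _)
      have h8 : (B / (2 * N)) * N = B / 2 := by field_simp
      have h9 := mul_le_mul_of_nonneg_right (min_le_right 1 (B / (2 * N))) hN0
      linarith
  have hexp : ‖y - a‖ ^ 2 = ‖y - b‖ ^ 2 - 2 * (inner ℝ (y - b) (a - b) : ℝ) + ‖a - b‖ ^ 2 := by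
    rw [show y - a = (y - b) - (a - b) by abel, norm_sub_sq_real]
  have hcomm : (inner ℝ (y - b) (a - b) : ℝ) = ι := real_inner_comm _ _
  nlinarith [sq_nonneg ‖a - b‖, hB, hexp, hcomm]


theorem stmt6 {H : Type*} [NormedAddCommGroup H] [InnerProductSpace ℝ H]
    [CompleteSpace H]
    (f : H → ℝ) (hf : ConvexOn ℝ Set.univ f) (hlsc : LowerSemicontinuous f)
    (hattain : ∃ z : H, ∀ y, f z ≤ f y)
    (lam : ℕ → ℝ) (hlam : ∀ k, 1 ≤ k → 0 < lam k) (hdiv : ¬ Summable fun k => lam (k + 1))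
    (x : ℕ → H)
    (hx : ∀ k, 1 ≤ k →
      IsMinOn (fun y => f y + ‖x (k - 1) - y‖ ^ 2 / (2 * lam k)) Set.univ (x k)) :
    Filter.Tendsto (fun k => f (x k)) Filter.atTop (nhds (⨅ y : H, f y)) ∧
      ∀ (y : H) (k : ℕ), 1 ≤ k →
        f (x k) - f y ≤ ‖y - x 0‖ ^ 2 / (2 * ∑ i ∈ Finset.Icc 1 k, lam i) := by
  have hkey : ∀ k, 1 ≤ k → ∀ y : H,
      2 * lam k * (f (x k) - f y) ≤ ‖y - x (k - 1)‖ ^ 2 - ‖y - x k‖ ^ 2 :=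
    fun k hk y => prox_key f hf (x (k - 1)) (x k) (lam k) (hlam k hk) (hx k hk) y
  have hdec : ∀ k, 1 ≤ k → f (x k) ≤ f (x (k - 1)) := by
    intro k hk
    have h := hkey k hk (x (k - 1))
    have hpos := hlam k hk
    simp only [sub_self, norm_zero] at h
    nlinarith [sq_nonneg ‖x (k - 1) - x k‖]
  have hanti : Antitone (fun k => f (x k)) := by
    apply antitone_nat_of_succ_le
    intro n
    have := hdec (n + 1) (by omega)
    simpa using this
  have hrate : ∀ (y : H) (k : ℕ), 1 ≤ k →
      f (x k) - f y ≤ ‖y - x 0‖ ^ 2 / (2 * ∑ i ∈ Finset.Icc 1 k, lam i) := by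
    intro y k hk
    set S : ℝ := ∑ i ∈ Finset.Icc 1 k, lam i with hS
    have hSpos : 0 < S := Finset.sum_pos
      (fun i hi => hlam i (Finset.mem_Icc.mp hi).1) ⟨1, Finset.mem_Icc.mpr ⟨le_rfl, hk⟩⟩
    -- telescoping sum
    have htel : ∑ i ∈ Finset.Icc 1 k, (‖y - x (i - 1)‖ ^ 2 - ‖y - x i‖ ^ 2)
        = ‖y - x 0‖ ^ 2 - ‖y - x k‖ ^ 2 := by
      rw [← Finset.Ico_add_one_right_eq_Icc, Finset.sum_Ico_eq_sum_range]
      have : ∀ i ∈ Finset.range (k + 1 - 1),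
          ‖y - x (1 + i - 1)‖ ^ 2 - ‖y - x (1 + i)‖ ^ 2
          = ‖y - x i‖ ^ 2 - ‖y - x (i + 1)‖ ^ 2 := by
        intro i _
        have e1 : 1 + i - 1 = i := by omega
        have e2 : 1 + i = i + 1 := by omega
        rw [e1, e2]
      rw [Finset.sum_congr rfl this, Finset.sum_range_sub' (fun i => ‖y - x i‖ ^ 2)]
      simp
    have hsum1 : ∑ i ∈ Finset.Icc 1 k, 2 * lam i * (f (x k) - f y)
        ≤ ∑ i ∈ Finset.Icc 1 k, 2 * lam i * (f (x i) - f y) := by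
      apply Finset.sum_le_sum
      intro i hi
      obtain ⟨hi1, hik⟩ := Finset.mem_Icc.mp hi
      have hfx : f (x k) ≤ f (x i) := hanti hik
      have := hlam i hi1
      nlinarith
    have hsum2 : ∑ i ∈ Finset.Icc 1 k, 2 * lam i * (f (x i) - f y)
        ≤ ∑ i ∈ Finset.Icc 1 k, (‖y - x (i - 1)‖ ^ 2 - ‖y - x i‖ ^ 2) :=
      Finset.sum_le_sum fun i hi => hkey i (Finset.mem_Icc.mp hi).1 y
    have hlhs : (f (x k) - f y) * (2 * S) = ∑ i ∈ Finset.Icc 1 k, 2 * lam i * (f (x k) - f y) := by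
      rw [hS, Finset.mul_sum, Finset.mul_sum]
      exact Finset.sum_congr rfl fun i _ => by ring
    have hmain : (f (x k) - f y) * (2 * S) ≤ ‖y - x 0‖ ^ 2 := by
      rw [hlhs]
      calc _ ≤ ‖y - x 0‖ ^ 2 - ‖y - x k‖ ^ 2 := by
              rw [← htel]; exact le_trans hsum1 hsum2
        _ ≤ _ := by nlinarith [sq_nonneg ‖y - x k‖]
    rw [le_div_iff₀ (by positivity)]
    exact hmain
  refine ⟨?_, hrate⟩
  obtain ⟨z, hz⟩ := hattain
  have hinf : (⨅ y : H, f y) = f z :=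
    le_antisymm (ciInf_le ⟨f z, by rintro _ ⟨y, rfl⟩; exact hz y⟩ z) (le_ciInf hz)
  have hSdiv : Tendsto (fun k => ∑ i ∈ Finset.Icc 1 k, lam i) atTop atTop := by
    have hre : ∀ k : ℕ, ∑ i ∈ Finset.Icc 1 k, lam i
        = ∑ i ∈ Finset.range k, lam (i + 1) := by
      intro k
      rw [← Finset.Ico_add_one_right_eq_Icc, Finset.sum_Ico_eq_sum_range]
      apply Finset.sum_congr (by congr 1)
      intro i _
      congr 1
      omega
    simp only [hre]
    exact (not_summable_iff_tendsto_nat_atTop_of_nonneg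
      (fun i => (hlam (i + 1) (by omega)).le)).mp hdiv
  have h0 : Tendsto (fun k => ‖z - x 0‖ ^ 2 / (2 * ∑ i ∈ Finset.Icc 1 k, lam i))
      atTop (nhds 0) :=
    Tendsto.div_atTop tendsto_const_nhds (hSdiv.const_mul_atTop two_pos)
  rw [hinf]
  apply tendsto_of_tendsto_of_tendsto_of_le_of_le' tendsto_const_nhds
    (by simpa using (tendsto_const_nhds.add h0 :
      Tendsto (fun k => f z + ‖z - x 0‖ ^ 2 / (2 * ∑ i ∈ Finset.Icc 1 k, lam i))
        atTop (nhds (f z + 0))))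
  · exact Eventually.of_forall fun k => hz (x k)
  · filter_upwards [eventually_ge_atTop 1] with k hk
    have := hrate z k hk
    linarith
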